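/- For every n ≥ 3, all configurations of the n²-puzzle are connected via legal moves: any bijection of n² labeled robots onto the vertices of the n×n grid graph can be transformed to any other by a sequence of synchronous rotations along vertex-disjoint cycles. -/

import Mathlib

/-- The `n × n` grid graph: vertices `Fin n × Fin n`, edges between vertices at
`L₁`-distance `1`. -/
def gridGraph (n : ℕ) : SimpleGraph (Fin n × Fin n) :=
  SimpleGraph.fromRel fun a b => Nat.dist a.1.1 b.1.1 + Nat.dist a.2.1 b.2.1 = 1

/-- A legal single-step move of the fully occupied graph `G`: a permutation `σ` of the
vertices such that every robot stays put or moves along an edge, and no two robots swap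
along an edge (no head-on collision).  Equivalently (since `σ` is a bijection), `σ`
synchronously rotates the robots along a collection of vertex-disjoint cycles of `G`
(of length at least 3) and fixes all other robots. -/
def LegalMove {V : Type*} (G : SimpleGraph V) (σ : Equiv.Perm V) : Prop :=
  (∀ v, σ v = v ∨ G.Adj v (σ v)) ∧ ∀ v, σ v ≠ v → σ (σ v) ≠ v

/-- One legal move between configurations (bijections from robots to vertices). -/
def Step {R V : Type*} (G : SimpleGraph V) (c c' : R ≃ V) : Prop :=
  ∃ σ : Equiv.Perm V, LegalMove G σ ∧ c' = c.trans σ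

namespace Stmt5Aux

open Equiv

abbrev V (n : ℕ) := Fin n × Fin n

/-- The subgroup generated by legal moves. -/
def Hgrp (n : ℕ) : Subgroup (Equiv.Perm (V n)) :=
  Subgroup.closure {σ | LegalMove (gridGraph n) σ}

lemma grid_adj_iff {m : ℕ} (a b : V m) :
    (gridGraph m).Adj a b ↔ a ≠ b ∧ Nat.dist a.1.1 b.1.1 + Nat.dist a.2.1 b.2.1 = 1 := by
  unfold gridGraph
  rw [SimpleGraph.fromRel_adj]
  constructor
  · rintro ⟨h1, h2 | h2⟩
    · exact ⟨h1, h2⟩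
    · exact ⟨h1, by rw [Nat.dist_comm a.1.1, Nat.dist_comm a.2.1]; exact h2⟩
  · rintro ⟨h1, h2⟩; exact ⟨h1, Or.inl h2⟩

instance {m : ℕ} : DecidableRel (gridGraph m).Adj := fun a b =>
  decidable_of_iff _ (grid_adj_iff a b).symm

/-! ### Rotations of 2×2 squares in the 3×3 grid -/

/-- The 4-cycle `a → b → c → d → a`. -/
def rot {α : Type*} [DecidableEq α] (a b c d : α) : Equiv.Perm α :=
  Equiv.swap a d * Equiv.swap a c * Equiv.swap a b

def r1 : Equiv.Perm (V 3) := rot (0, 0) (0, 1) (1, 1) (1, 0)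
def r2 : Equiv.Perm (V 3) := rot (0, 1) (0, 2) (1, 2) (1, 1)
def r3 : Equiv.Perm (V 3) := rot (1, 0) (1, 1) (2, 1) (2, 0)
def r4 : Equiv.Perm (V 3) := rot (1, 1) (1, 2) (2, 2) (2, 1)

lemma legal_r1 : LegalMove (gridGraph 3) r1 := by
  constructor <;> decide

lemma legal_r2 : LegalMove (gridGraph 3) r2 := by
  constructor <;> decide

lemma legal_r3 : LegalMove (gridGraph 3) r3 := by
  constructor <;> decide

lemma legal_r4 : LegalMove (gridGraph 3) r4 := by
  constructor <;> decide

lemma m1 : r1 ∈ Hgrp 3 := Subgroup.subset_closure legal_r1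
lemma m2 : r2 ∈ Hgrp 3 := Subgroup.subset_closure legal_r2
lemma m3 : r3 ∈ Hgrp 3 := Subgroup.subset_closure legal_r3
lemma m4 : r4 ∈ Hgrp 3 := Subgroup.subset_closure legal_r4

lemma w00 : r3⁻¹ * r2 * r3 * r2⁻¹ * r1⁻¹ = Equiv.swap ((0, 0) : V 3) (0, 1) :=
  Equiv.ext_iff.mpr (by decide)

lemma w01 : r4⁻¹ * r2⁻¹ * r1⁻¹ * r4 * r1 = Equiv.swap ((0, 1) : V 3) (0, 2) :=
  Equiv.ext_iff.mpr (by decide)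

lemma w10 : r1⁻¹ * r2 * r3⁻¹ * r2⁻¹ * r3 * r1 * r1 = Equiv.swap ((1, 0) : V 3) (1, 1) :=
  Equiv.ext_iff.mpr (by decide)

lemma w11 : r4⁻¹ * r3⁻¹ * r4⁻¹ * r3 * r1 * r4 * r1⁻¹ = Equiv.swap ((1, 1) : V 3) (1, 2) :=
  Equiv.ext_iff.mpr (by decide)

lemma w20 : r4⁻¹ * r1⁻¹ * r4 * r3 * r1 = Equiv.swap ((2, 0) : V 3) (2, 1) :=
  Equiv.ext_iff.mpr (by decide)

lemma w21 : r4 * r3 * r2⁻¹ * r3⁻¹ * r2 = Equiv.swap ((2, 1) : V 3) (2, 2) :=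
  Equiv.ext_iff.mpr (by decide)

lemma sw00 : Equiv.swap ((0, 0) : V 3) (0, 1) ∈ Hgrp 3 := by
  rw [← w00]
  exact mul_mem (mul_mem (mul_mem (mul_mem (inv_mem m3) m2) m3) (inv_mem m2)) (inv_mem m1)

lemma sw01 : Equiv.swap ((0, 1) : V 3) (0, 2) ∈ Hgrp 3 := by
  rw [← w01]
  exact mul_mem (mul_mem (mul_mem (mul_mem (inv_mem m4) (inv_mem m2)) (inv_mem m1)) m4) m1

lemma sw10 : Equiv.swap ((1, 0) : V 3) (1, 1) ∈ Hgrp 3 := by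
  rw [← w10]
  exact mul_mem (mul_mem (mul_mem (mul_mem (mul_mem (mul_mem (inv_mem m1) m2) (inv_mem m3))
    (inv_mem m2)) m3) m1) m1

lemma sw11 : Equiv.swap ((1, 1) : V 3) (1, 2) ∈ Hgrp 3 := by
  rw [← w11]
  exact mul_mem (mul_mem (mul_mem (mul_mem (mul_mem (mul_mem (inv_mem m4) (inv_mem m3))
    (inv_mem m4)) m3) m1) m4) (inv_mem m1)

lemma sw20 : Equiv.swap ((2, 0) : V 3) (2, 1) ∈ Hgrp 3 := by
  rw [← w20]
  exact mul_mem (mul_mem (mul_mem (mul_mem (inv_mem m4) (inv_mem m1)) m4) m3) m1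

lemma sw21 : Equiv.swap ((2, 1) : V 3) (2, 2) ∈ Hgrp 3 := by
  rw [← w21]
  exact mul_mem (mul_mem (mul_mem (mul_mem m4 m3) (inv_mem m2)) (inv_mem m3)) m2

/-! ### Embedding the 3×3 grid into the n×n grid -/

variable {n : ℕ}

/-- Translation embedding. -/
def tfun (i j : ℕ) (hi : i + 3 ≤ n) (hj : j + 3 ≤ n) (p : V 3) : V n :=
  (⟨i + p.1.1, by have := p.1.2; omega⟩, ⟨j + p.2.1, by have := p.2.2; omega⟩)

/-- Transposed translation embedding. -/
def sfun (i j : ℕ) (hi : i + 3 ≤ n) (hj : j + 3 ≤ n) (p : V 3) : V n :=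
  (⟨i + p.2.1, by have := p.2.2; omega⟩, ⟨j + p.1.1, by have := p.1.2; omega⟩)

lemma tfun_inj (i j : ℕ) (hi : i + 3 ≤ n) (hj : j + 3 ≤ n) :
    Function.Injective (tfun i j hi hj) := by
  intro a b h
  obtain ⟨⟨a1, ha1⟩, ⟨a2, ha2⟩⟩ := a
  obtain ⟨⟨b1, hb1⟩, ⟨b2, hb2⟩⟩ := b
  simp only [tfun, Prod.mk.injEq, Fin.mk.injEq] at h ⊢
  omega

lemma sfun_inj (i j : ℕ) (hi : i + 3 ≤ n) (hj : j + 3 ≤ n) :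
    Function.Injective (sfun i j hi hj) := by
  intro a b h
  obtain ⟨⟨a1, ha1⟩, ⟨a2, ha2⟩⟩ := a
  obtain ⟨⟨b1, hb1⟩, ⟨b2, hb2⟩⟩ := b
  simp only [sfun, Prod.mk.injEq, Fin.mk.injEq] at h ⊢
  omega

lemma tfun_adj (i j : ℕ) (hi : i + 3 ≤ n) (hj : j + 3 ≤ n) (a b : V 3)
    (hab : (gridGraph 3).Adj a b) :
    (gridGraph n).Adj (tfun i j hi hj a) (tfun i j hi hj b) := by
  rw [grid_adj_iff] at hab ⊢
  refine ⟨fun h => hab.1 (tfun_inj i j hi hj h), ?_⟩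
  have h2 := hab.2
  simp only [tfun, Nat.dist] at h2 ⊢
  omega

lemma sfun_adj (i j : ℕ) (hi : i + 3 ≤ n) (hj : j + 3 ≤ n) (a b : V 3)
    (hab : (gridGraph 3).Adj a b) :
    (gridGraph n).Adj (sfun i j hi hj a) (sfun i j hi hj b) := by
  rw [grid_adj_iff] at hab ⊢
  refine ⟨fun h => hab.1 (sfun_inj i j hi hj h), ?_⟩
  have h2 := hab.2
  simp only [sfun, Nat.dist] at h2 ⊢
  omega

/-- Extending a legal move of the 3×3 grid along an adjacency-preserving embedding
gives a legal move of the n×n grid. -/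
lemma legal_via (f : V 3 ↪ V n)
    (hf : ∀ a b : V 3, (gridGraph 3).Adj a b → (gridGraph n).Adj (f a) (f b))
    {σ : Equiv.Perm (V 3)} (hσ : LegalMove (gridGraph 3) σ) :
    LegalMove (gridGraph n) (σ.viaFintypeEmbedding f) := by
  constructor
  · intro v
    by_cases hv : v ∈ Set.range f
    · obtain ⟨a, rfl⟩ := hv
      rw [Equiv.Perm.viaFintypeEmbedding_apply_image]
      rcases hσ.1 a with h | h
      · left; rw [h]
      · right; exact hf a (σ a) h
    · left; exact Equiv.Perm.viaFintypeEmbedding_apply_notMem_range σ f hv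
  · intro v hv
    by_cases hrange : v ∈ Set.range f
    · obtain ⟨a, rfl⟩ := hrange
      rw [Equiv.Perm.viaFintypeEmbedding_apply_image] at hv ⊢
      rw [Equiv.Perm.viaFintypeEmbedding_apply_image]
      have ha : σ a ≠ a := fun h => hv (by rw [h])
      intro h
      exact hσ.2 a ha (f.injective h)
    · exact absurd (Equiv.Perm.viaFintypeEmbedding_apply_notMem_range σ f hrange) hv

/-- Transfer of membership in the legal-move subgroup along the embedding. -/
lemma transfer (f : V 3 ↪ V n)
    (hf : ∀ a b : V 3, (gridGraph 3).Adj a b → (gridGraph n).Adj (f a) (f b))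
    {σ : Equiv.Perm (V 3)} (hσ : σ ∈ Hgrp 3) :
    σ.viaFintypeEmbedding f ∈ Hgrp n := by
  have hle : (Hgrp 3).map (Equiv.Perm.extendDomainHom f.toEquivRange) ≤ Hgrp n := by
    rw [Hgrp, MonoidHom.map_closure]
    refine (Subgroup.closure_le _).2 ?_
    rintro x ⟨τ, hτ, rfl⟩
    exact Subgroup.subset_closure (legal_via f hf hτ)
  exact hle ⟨σ, hσ, rfl⟩

lemma via_swap (f : V 3 ↪ V n) (p q : V 3) :
    (Equiv.swap p q).viaFintypeEmbedding f = Equiv.swap (f p) (f q) := by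
  apply Equiv.ext
  intro x
  by_cases hx : x ∈ Set.range f
  · obtain ⟨a, rfl⟩ := hx
    rw [Equiv.Perm.viaFintypeEmbedding_apply_image]
    rcases eq_or_ne a p with rfl | hap
    · rw [Equiv.swap_apply_left, Equiv.swap_apply_left]
    rcases eq_or_ne a q with rfl | haq
    · rw [Equiv.swap_apply_right, Equiv.swap_apply_right]
    · rw [Equiv.swap_apply_of_ne_of_ne hap haq,
        Equiv.swap_apply_of_ne_of_ne (fun h => hap (f.injective h))
          (fun h => haq (f.injective h))]
  · rw [Equiv.Perm.viaFintypeEmbedding_apply_notMem_range _ f hx]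
    rw [Equiv.swap_apply_of_ne_of_ne (fun h => hx ⟨p, h.symm⟩) (fun h => hx ⟨q, h.symm⟩)]

/-! ### All adjacent swaps are in the subgroup -/

lemma sw3 (a b : ℕ) (ha : a < 3) (hb : b < 2) :
    Equiv.swap ((⟨a, ha⟩, ⟨b, by omega⟩) : V 3) (⟨a, ha⟩, ⟨b + 1, by omega⟩) ∈ Hgrp 3 := by
  interval_cases a <;> interval_cases b
  · exact sw00
  · exact sw01
  · exact sw10
  · exact sw11
  · exact sw20
  · exact sw21

lemma swap_horiz (hn : 3 ≤ n) (i j : ℕ) (hi : i < n) (hj : j + 1 < n) :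
    Equiv.swap ((⟨i, hi⟩, ⟨j, by omega⟩) : V n) (⟨i, hi⟩, ⟨j + 1, hj⟩) ∈ Hgrp n := by
  obtain ⟨i0, a, hi0, ha2, rfl⟩ : ∃ i0 a, i0 + 3 ≤ n ∧ a < 3 ∧ i = i0 + a :=
    ⟨min i (n - 3), i - min i (n - 3), by omega, by omega, by omega⟩
  obtain ⟨j0, b, hj0, hb2, rfl⟩ : ∃ j0 b, j0 + 3 ≤ n ∧ b < 2 ∧ j = j0 + b :=
    ⟨min j (n - 3), j - min j (n - 3), by omega, by omega, by omega⟩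
  have key := transfer ⟨tfun i0 j0 hi0 hj0, tfun_inj i0 j0 hi0 hj0⟩
    (tfun_adj i0 j0 hi0 hj0) (sw3 a b ha2 hb2)
  rw [via_swap] at key
  convert key using 2
  all_goals rfl

lemma swap_vert (hn : 3 ≤ n) (i j : ℕ) (hi : i + 1 < n) (hj : j < n) :
    Equiv.swap ((⟨i, by omega⟩, ⟨j, hj⟩) : V n) (⟨i + 1, hi⟩, ⟨j, hj⟩) ∈ Hgrp n := by
  obtain ⟨i0, b, hi0, hb2, rfl⟩ : ∃ i0 b, i0 + 3 ≤ n ∧ b < 2 ∧ i = i0 + b :=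
    ⟨min i (n - 3), i - min i (n - 3), by omega, by omega, by omega⟩
  obtain ⟨j0, a, hj0, ha2, rfl⟩ : ∃ j0 a, j0 + 3 ≤ n ∧ a < 3 ∧ j = j0 + a :=
    ⟨min j (n - 3), j - min j (n - 3), by omega, by omega, by omega⟩
  have key := transfer ⟨sfun i0 j0 hi0 hj0, sfun_inj i0 j0 hi0 hj0⟩
    (sfun_adj i0 j0 hi0 hj0) (sw3 a b ha2 hb2)
  rw [via_swap] at key
  convert key using 2
  all_goals rfl

lemma swap_adj (hn : 3 ≤ n) (u v : V n)
    (h : Nat.dist u.1.1 v.1.1 + Nat.dist u.2.1 v.2.1 = 1) :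
    Equiv.swap u v ∈ Hgrp n := by
  obtain ⟨⟨ui, hui⟩, ⟨uj, huj⟩⟩ := u
  obtain ⟨⟨vi, hvi⟩, ⟨vj, hvj⟩⟩ := v
  simp only [Nat.dist] at h
  have : (ui = vi ∧ (uj + 1 = vj ∨ vj + 1 = uj)) ∨
      (uj = vj ∧ (ui + 1 = vi ∨ vi + 1 = ui)) := by omega
  rcases this with ⟨h1, h2 | h2⟩ | ⟨h1, h2 | h2⟩
  · subst h1; subst h2; exact swap_horiz hn ui uj hui hvj
  · subst h1; subst h2; rw [Equiv.swap_comm]; exact swap_horiz hn ui vj hui huj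
  · subst h1; subst h2; exact swap_vert hn ui uj hvi huj
  · subst h1; subst h2; rw [Equiv.swap_comm]; exact swap_vert hn vi uj hui huj

lemma swap_mem (hn : 3 ≤ n) :
    ∀ (d : ℕ) (u v : V n), u ≠ v →
      Nat.dist u.1.1 v.1.1 + Nat.dist u.2.1 v.2.1 = d → Equiv.swap u v ∈ Hgrp n := by
  intro d
  induction d using Nat.strong_induction_on with
  | _ d ih =>
    intro u v huv hd
    rcases Nat.lt_or_ge d 2 with h2 | h2
    · have : d = 0 ∨ d = 1 := by omega
      rcases this with rfl | rfl
      · exfalso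
        apply huv
        obtain ⟨⟨ui, hui⟩, ⟨uj, huj⟩⟩ := u
        obtain ⟨⟨vi, hvi⟩, ⟨vj, hvj⟩⟩ := v
        simp only [Nat.dist] at hd
        simp only [Prod.mk.injEq, Fin.mk.injEq]
        omega
      · exact swap_adj hn u v hd
    · obtain ⟨⟨ui, hui⟩, ⟨uj, huj⟩⟩ := u
      obtain ⟨⟨vi, hvi⟩, ⟨vj, hvj⟩⟩ := v
      simp only [Nat.dist] at hd
      set u : V n := (⟨ui, hui⟩, ⟨uj, huj⟩) with hu
      set v : V n := (⟨vi, hvi⟩, ⟨vj, hvj⟩) with hv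
      by_cases hcoord : ui = vi
      · -- move in the second coordinate
        obtain ⟨wj, hwjn, hadj, hdist, hne1, hne2⟩ :
            ∃ wj, wj < n ∧ (wj - vj + (vj - wj) = 1) ∧
              (uj - wj + (wj - uj) = d - 1) ∧ wj ≠ uj ∧ wj ≠ vj := by
          rcases Nat.lt_or_ge uj vj with hlt | hge
          · exact ⟨vj - 1, by omega, by omega, by omega, by omega, by omega⟩
          · exact ⟨vj + 1, by omega, by omega, by omega, by omega, by omega⟩
        set w : V n := (⟨ui, hui⟩, ⟨wj, hwjn⟩) with hw
        have hswv : Equiv.swap w v ∈ Hgrp n := by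
          apply swap_adj hn
          simp only [hw, hv, Nat.dist]
          omega
        have huw : u ≠ w := by
          simp only [hw, hu, ne_eq, Prod.mk.injEq, Fin.mk.injEq]
          omega
        have hsuw : Equiv.swap u w ∈ Hgrp n := by
          apply ih (d - 1) (by omega) _ _ huw
          simp only [hw, hu, Nat.dist]
          omega
        have key : Equiv.swap u v = Equiv.swap w v * Equiv.swap u w * (Equiv.swap w v)⁻¹ := by
          rw [← Equiv.swap_apply_apply, Equiv.swap_apply_left,
            Equiv.swap_apply_of_ne_of_ne huw huv]
        rw [key]
        exact mul_mem (mul_mem hswv hsuw) (inv_mem hswv)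
      · -- move in the first coordinate
        obtain ⟨wi, hwin, hadj, hdist, hne1, hne2⟩ :
            ∃ wi, wi < n ∧ (wi - vi + (vi - wi) = 1) ∧
              (ui - wi + (wi - ui) + (uj - vj + (vj - uj)) = d - 1) ∧
              (wi ≠ ui ∨ uj ≠ vj) ∧ wi ≠ vi := by
          rcases Nat.lt_or_ge ui vi with hlt | hge
          · exact ⟨vi - 1, by omega, by omega, by omega, by omega, by omega⟩
          · exact ⟨vi + 1, by omega, by omega, by omega, by omega, by omega⟩
        set w : V n := (⟨wi, hwin⟩, ⟨vj, hvj⟩) with hw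
        have hswv : Equiv.swap w v ∈ Hgrp n := by
          apply swap_adj hn
          simp only [hw, hv, Nat.dist]
          omega
        have huw : u ≠ w := by
          simp only [hw, hu, ne_eq, Prod.mk.injEq, Fin.mk.injEq]
          omega
        have hsuw : Equiv.swap u w ∈ Hgrp n := by
          apply ih (d - 1) (by omega) _ _ huw
          simp only [hw, hu, Nat.dist]
          omega
        have key : Equiv.swap u v = Equiv.swap w v * Equiv.swap u w * (Equiv.swap w v)⁻¹ := by
          rw [← Equiv.swap_apply_apply, Equiv.swap_apply_left,
            Equiv.swap_apply_of_ne_of_ne huw huv]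
        rw [key]
        exact mul_mem (mul_mem hswv hsuw) (inv_mem hswv)

lemma H_top (hn : 3 ≤ n) : Hgrp n = ⊤ := by
  rw [eq_top_iff, ← Equiv.Perm.closure_isSwap]
  refine (Subgroup.closure_le _).2 ?_
  rintro σ ⟨u, v, huv, rfl⟩
  exact swap_mem hn _ u v huv rfl

/-! ### From subgroup membership to reachability -/

lemma legal_inv {W : Type*} {G : SimpleGraph W} {σ : Equiv.Perm W}
    (h : LegalMove G σ) : LegalMove G σ⁻¹ := by
  obtain ⟨h1, h2⟩ := h
  constructor
  · intro v
    rcases h1 (σ⁻¹ v) with h3 | h3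
    · left; exact h3.symm.trans (σ.apply_symm_apply v)
    · right
      rw [show σ (σ⁻¹ v) = v from σ.apply_symm_apply v] at h3
      exact h3.symm
  · intro v hv hvv
    have h4 : σ v = σ⁻¹ v := by
      have := congrArg σ hvv
      rw [show ∀ x, σ (σ⁻¹ x) = x from σ.apply_symm_apply] at this
      exact this.symm
    exact h2 v (by rw [h4]; exact hv) (by rw [h4, show σ (σ⁻¹ v) = v from σ.apply_symm_apply v])

lemma step_symm {R W : Type*} {G : SimpleGraph W} {c d : R ≃ W}
    (h : Step G c d) : Step G d c := by
  obtain ⟨σ, hσ, rfl⟩ := h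
  exact ⟨σ⁻¹, legal_inv hσ, Equiv.ext fun x => (σ.symm_apply_apply (c x)).symm⟩

lemma reach {R : Type*} (σ : Equiv.Perm (V n)) (hσ : σ ∈ Hgrp n) :
    ∀ c0 : R ≃ V n, Relation.ReflTransGen (Step (gridGraph n)) c0 (c0.trans σ) := by
  refine Subgroup.closure_induction
    (p := fun σ _ => ∀ c0 : R ≃ V n,
      Relation.ReflTransGen (Step (gridGraph n)) c0 (c0.trans σ))
    ?_ ?_ ?_ ?_ hσ
  · intro τ hτ c0
    exact Relation.ReflTransGen.single ⟨τ, hτ, rfl⟩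
  · intro c0
    have : c0.trans (1 : Equiv.Perm (V n)) = c0 := Equiv.ext fun x => rfl
    rw [this]
  · intro τ ρ _ _ hτ' hρ' c0
    have e : c0.trans (τ * ρ) = (c0.trans ρ).trans τ := Equiv.ext fun x => rfl
    rw [e]
    exact (hρ' c0).trans (hτ' (c0.trans ρ))
  · intro τ _ hτ' c0
    have e : (c0.trans τ⁻¹).trans τ = c0 := Equiv.ext fun x => τ.apply_symm_apply (c0 x)
    have h1 := hτ' (c0.trans τ⁻¹)
    rw [e] at h1
    haveI : Std.Symm (@Step R (V n) (gridGraph n)) := ⟨fun _ _ hab => step_symm hab⟩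
    exact Std.Symm.symm _ _ h1

end Stmt5Aux

/-- For every `n ≥ 3`, all configurations of the `n²`-puzzle are connected via legal moves:
any bijection of the `n²` labeled robots onto the vertices of the `n × n` grid graph can be
transformed to any other by a sequence of synchronous rotations along vertex-disjoint
cycles. -/
theorem stmt5 (n : ℕ) (hn : 3 ≤ n) (c c' : Fin (n ^ 2) ≃ Fin n × Fin n) :
    Relation.ReflTransGen (Step (gridGraph n)) c c' := by
  have hσ : c.symm.trans c' ∈ Stmt5Aux.Hgrp n := by
    rw [Stmt5Aux.H_top hn]
    exact Subgroup.mem_top _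
  have h := Stmt5Aux.reach (c.symm.trans c') hσ c
  have e : c.trans (c.symm.trans c') = c' := Equiv.ext fun x => by simp
  rwa [e] at h
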